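/- Let L > 0, v_r > 0, ω_r > 0, set φ = arctan(v_r/(Lω_r)), and define f(θ̃) = (√(L²ω_r² + v_r²)/L)·(cos(θ̃ + φ) − cos φ). Let θ̃ : [0, ∞) → ℝ be differentiable with θ̃'(t) = f(θ̃(t)) for all t ≥ 0 and θ̃(0) ∈ (−2φ, 2π − 2φ). Then θ̃(t) → 0 as t → ∞. -/

import Mathlib

open Real Filter

/-- `cos` changes by at most the change of the argument. -/
private lemma abs_cos_sub_cos_le' (a b : ℝ) : |Real.cos a - Real.cos b| ≤ |a - b| := by
  rw [Real.cos_sub_cos]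
  have h1 : |Real.sin ((a + b) / 2)| ≤ 1 := Real.abs_sin_le_one _
  have h2 : |Real.sin ((a - b) / 2)| ≤ |(a - b) / 2| := Real.abs_sin_le_abs
  have h3 : |(a - b) / 2| = |a - b| / 2 := by rw [abs_div]; norm_num
  calc |(-2) * Real.sin ((a + b) / 2) * Real.sin ((a - b) / 2)|
      = 2 * |Real.sin ((a + b) / 2)| * |Real.sin ((a - b) / 2)| := by
        rw [abs_mul, abs_mul]; norm_num
    _ ≤ 2 * 1 * (|a - b| / 2) := by
        apply mul_le_mul _ (h3 ▸ h2) (abs_nonneg _)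
        · positivity
        · apply mul_le_mul_of_nonneg_left h1; norm_num
    _ = |a - b| := by ring

/-- Backward-in-time uniqueness: if a solution of `θ' = f(θ)` (f Lipschitz) equals
an equilibrium value `c` at some time `t₂ ≥ 0`, then it equals `c` at time `0`. -/
private lemma backward_eq {K : NNReal} {f : ℝ → ℝ} (hlip : LipschitzWith K f)
    {θ : ℝ → ℝ} (hode : ∀ t ≥ (0:ℝ), HasDerivAt θ (f (θ t)) t)
    {c : ℝ} (hc : f c = 0) {t₂ : ℝ} (ht₂ : 0 ≤ t₂) (heq : θ t₂ = c) : θ 0 = c := by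
  have h := ODE_solution_unique_of_mem_Icc_left
    (v := fun _ x => f x) (s := fun _ => Set.univ) (K := K)
    (fun _ _ => hlip.lipschitzOnWith)
    (f := θ) (g := fun _ => c) (a := 0) (b := t₂)
    (fun t ht => ((hode t ht.1).continuousAt).continuousWithinAt)
    (fun t ht => ((hode t (le_of_lt ht.1)).hasDerivWithinAt))
    (fun _ _ => trivial)
    continuousOn_const
    (fun t _ => by simpa [hc] using (hasDerivWithinAt_const t (Set.Iic t) c))
    (fun _ _ => trivial)
    heq
  exact h ⟨le_refl 0, ht₂⟩

/-- Core convergence lemma: if `f` is Lipschitz, `f 0 = 0 = f b` with `b > 0` and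
`f < 0` on `(0, b)`, then every solution of `θ' = f(θ)` starting in `(0, b)`
converges to `0`. -/
private lemma core {K : NNReal} {f : ℝ → ℝ} (hlip : LipschitzWith K f) {b : ℝ}
    (hf0 : f 0 = 0) (hfb : f b = 0) (hneg : ∀ x ∈ Set.Ioo 0 b, f x < 0)
    {θ : ℝ → ℝ} (hode : ∀ t ≥ (0:ℝ), HasDerivAt θ (f (θ t)) t)
    (h0 : θ 0 ∈ Set.Ioo 0 b) : Tendsto θ atTop (nhds 0) := by
  -- continuity of θ on [0, ∞)
  have hcont : ContinuousOn θ (Set.Ici 0) :=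
    fun t ht => ((hode t ht).continuousAt).continuousWithinAt
  -- invariance: θ stays in (0, b)
  have hinv : ∀ t ≥ (0:ℝ), θ t ∈ Set.Ioo 0 b := by
    intro t ht
    by_contra hout
    rcases (not_and_or.mp (Set.mem_Ioo.not.mp hout)) with hle | hge
    · push_neg at hle
      -- θ t ≤ 0, so θ hits 0 on [0, t]
      have hiv : (0:ℝ) ∈ Set.Icc (θ t) (θ 0) := ⟨hle, h0.1.le⟩
      obtain ⟨t₂, ht₂, heq⟩ := intermediate_value_Icc' ht
        (hcont.mono (Set.Icc_subset_Ici_self.trans_eq (by simp))) hiv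
      have := backward_eq hlip hode hf0 ht₂.1 heq
      exact absurd this (ne_of_gt h0.1)
    · push_neg at hge
      have hiv : b ∈ Set.Icc (θ 0) (θ t) := ⟨h0.2.le, hge⟩
      obtain ⟨t₂, ht₂, heq⟩ := intermediate_value_Icc ht
        (hcont.mono (Set.Icc_subset_Ici_self.trans_eq (by simp))) hiv
      have := backward_eq hlip hode hfb ht₂.1 heq
      exact absurd this (ne_of_lt h0.2)
  -- θ is antitone on [0, ∞)
  have hanti : AntitoneOn θ (Set.Ici 0) := by
    apply antitoneOn_of_deriv_nonpos (convex_Ici 0) hcont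
    · intro x hx
      rw [interior_Ici] at hx
      exact ((hode x (le_of_lt hx)).differentiableAt).differentiableWithinAt
    · intro x hx
      rw [interior_Ici] at hx
      rw [(hode x (le_of_lt hx)).deriv]
      exact (hneg _ (hinv x (le_of_lt hx))).le
  -- the shifted function is antitone on all of ℝ
  set θh : ℝ → ℝ := fun t => θ (max t 0) with hθh
  have hθhanti : Antitone θh := by
    intro s t hst
    exact hanti (le_max_right s 0) (le_max_right t 0) (max_le_max hst le_rfl)
  have hθhpos : ∀ t, 0 < θh t := fun t => (hinv _ (le_max_right t 0)).1
  have hbdd : BddBelow (Set.range θh) :=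
    ⟨0, fun y hy => by obtain ⟨t, rfl⟩ := hy; exact (hθhpos t).le⟩
  set l : ℝ := ⨅ t, θh t with hl
  have htendh : Tendsto θh atTop (nhds l) := tendsto_atTop_ciInf hθhanti hbdd
  have heqev : θh =ᶠ[atTop] θ := by
    filter_upwards [eventually_ge_atTop (0:ℝ)] with t ht
    simp [hθh, max_eq_left ht]
  have htend : Tendsto θ atTop (nhds l) := htendh.congr' heqev
  have hlle : ∀ t, l ≤ θh t := fun t => ciInf_le hbdd t
  have hlle' : ∀ t ≥ (0:ℝ), l ≤ θ t := by
    intro t ht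
    have := hlle t
    simpa [hθh, max_eq_left ht] using this
  have hl0 : 0 ≤ l := le_ciInf fun t => (hθhpos t).le
  have hlb : l < b := by
    calc l ≤ θh 0 := hlle 0
      _ = θ 0 := by simp [hθh]
      _ < b := h0.2
  -- show l = 0
  have hlzero : l = 0 := by
    by_contra hne
    have hlpos : 0 < l := lt_of_le_of_ne hl0 (Ne.symm hne)
    have hfl : f l < 0 := hneg l ⟨hlpos, hlb⟩
    set c : ℝ := f l / 2 with hc
    have hcneg : c < 0 := by simp [hc]; linarith
    have hflc : f l < c := by simp [hc]; linarith
    -- eventually f x < c near l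
    have hev : ∀ᶠ x in nhds l, f x < c :=
      (hlip.continuous.continuousAt).eventually_lt_const hflc
    obtain ⟨δ, hδ, hball⟩ := Metric.eventually_nhds_iff_ball.mp hev
    -- choose T ≥ 0 with θ T < l + δ
    have hev2 : ∀ᶠ t in atTop, θ t < l + δ :=
      htend.eventually_lt_const (by linarith)
    obtain ⟨T, hT⟩ := (hev2.and (eventually_ge_atTop (0:ℝ))).exists
    obtain ⟨hTlt, hT0⟩ := hT
    -- on [T, ∞), f (θ t) < c
    have hkey : ∀ t ≥ T, f (θ t) < c := by
      intro t ht
      have h1 : l ≤ θ t := hlle' t (hT0.trans ht)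
      have h2 : θ t ≤ θ T := hanti hT0 (hT0.trans ht) ht
      apply hball
      rw [Metric.mem_ball, Real.dist_eq, abs_lt]
      constructor <;> [linarith; linarith]
    -- h t := θ t - c * t is antitone on [T, ∞)
    have hderiv : ∀ t ≥ T, HasDerivAt (fun t => θ t - c * t) (f (θ t) - c) t := by
      intro t ht
      exact (hode t (hT0.trans ht)).sub (by simpa using (hasDerivAt_id t).const_mul c)
    have hanti2 : AntitoneOn (fun t => θ t - c * t) (Set.Ici T) := by
      apply antitoneOn_of_deriv_nonpos (convex_Ici T)
      · exact fun t ht => ((hderiv t ht).continuousAt).continuousWithinAt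
      · intro x hx
        rw [interior_Ici] at hx
        exact ((hderiv x hx.le).differentiableAt).differentiableWithinAt
      · intro x hx
        rw [interior_Ici] at hx
        rw [(hderiv x hx.le).deriv]
        linarith [hkey x hx.le]
    -- take t large enough to get a contradiction
    set t : ℝ := T + (θ T - l + 1) / (-c) with hts
    have hθTl : l ≤ θ T := hlle' T hT0
    have httT : T ≤ t := by
      rw [hts]
      have : 0 ≤ (θ T - l + 1) / (-c) := div_nonneg (by linarith) (by linarith)
      linarith
    have hmono := hanti2 (Set.mem_Ici.mpr le_rfl) (Set.mem_Ici.mpr httT) httT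
    simp only at hmono
    -- θ t - c t ≤ θ T - c T, so θ t ≤ θ T + c (t - T) = l - 1
    have hct : c * (t - T) = -(θ T - l + 1) := by
      rw [hts, add_sub_cancel_left]
      have hne' : (-c) ≠ 0 := by linarith
      have hdm := div_mul_cancel₀ (θ T - l + 1) hne'
      linear_combination -hdm
    have hθt : θ t ≤ l - 1 := by nlinarith [hmono]
    have : l ≤ θ t := hlle' t (hT0.trans httT)
    linarith
  rw [hlzero] at htend
  exact htend

/-- Every solution of the heading-error zero dynamics `θ̃' = f(θ̃)` starting
strictly between the unstable equilibria `−2φ` and `2π − 2φ` converges to the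
stable equilibrium `0`. -/
theorem stmt12 (L v_r ω_r : ℝ) (hL : 0 < L) (hv : 0 < v_r) (hω : 0 < ω_r)
    (φ : ℝ) (hφ : φ = arctan (v_r / (L * ω_r)))
    (f : ℝ → ℝ)
    (hf : f = fun θ' => Real.sqrt (L ^ 2 * ω_r ^ 2 + v_r ^ 2) / L *
      (cos (θ' + φ) - cos φ))
    (θ' : ℝ → ℝ)
    (hode : ∀ t ≥ (0:ℝ), HasDerivAt θ' (f (θ' t)) t)
    (h0 : θ' 0 ∈ Set.Ioo (-2 * φ) (2 * π - 2 * φ)) :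
    Tendsto θ' atTop (nhds 0) := by
  set k : ℝ := Real.sqrt (L ^ 2 * ω_r ^ 2 + v_r ^ 2) / L with hk
  have hkpos : 0 < k := by
    apply div_pos _ hL
    apply Real.sqrt_pos.mpr
    positivity
  -- bounds on φ
  have hφpos : 0 < φ := by
    rw [hφ, ← Real.arctan_zero]
    exact Real.arctan_strictMono (by positivity)
  have hφlt : φ < π / 2 := hφ ▸ Real.arctan_lt_pi_div_two _
  have hπ : 0 < π := Real.pi_pos
  -- f is Lipschitz
  have hlip : LipschitzWith (Real.toNNReal k) f := by
    apply LipschitzWith.of_dist_le_mul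
    intro x y
    simp only [hf, Real.dist_eq, Real.coe_toNNReal _ hkpos.le]
    have heq : k * (cos (x + φ) - cos φ) - k * (cos (y + φ) - cos φ)
        = k * (cos (x + φ) - cos (y + φ)) := by ring
    rw [heq, abs_mul, abs_of_nonneg hkpos.le]
    have h1 : |cos (x + φ) - cos (y + φ)| ≤ |x - y| := by
      have := abs_cos_sub_cos_le' (x + φ) (y + φ)
      simpa using this
    exact mul_le_mul_of_nonneg_left h1 hkpos.le
  -- zeros of f
  have hf0 : f 0 = 0 := by simp [hf]
  have hfneg2φ : f (-(2 * φ)) = 0 := by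
    simp only [hf]
    have : -(2 * φ) + φ = -φ := by ring
    rw [this, Real.cos_neg, sub_self, mul_zero]
  have hf2π : f (2 * π - 2 * φ) = 0 := by
    simp only [hf]
    have : 2 * π - 2 * φ + φ = 2 * π - φ := by ring
    rw [this, Real.cos_two_pi_sub, sub_self, mul_zero]
  -- sign of f on (0, 2π - 2φ): negative
  have hsignr : ∀ x ∈ Set.Ioo 0 (2 * π - 2 * φ), f x < 0 := by
    intro x hx
    have hy1 : φ < x + φ := by linarith [hx.1]
    have hy2 : x + φ < 2 * π - φ := by linarith [hx.2]
    have hcos : cos (x + φ) < cos φ := by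
      rcases le_or_gt (x + φ) π with hle | hgt
      · exact Real.cos_lt_cos_of_nonneg_of_le_pi hφpos.le hle hy1
      · have hz1 : φ < 2 * π - (x + φ) := by linarith
        have hz2 : 2 * π - (x + φ) ≤ π := by linarith
        have : cos (x + φ) = cos (2 * π - (2 * π - (x + φ))) := by ring_nf
        rw [show x + φ = 2 * π - (2 * π - (x + φ)) by ring, Real.cos_two_pi_sub]
        exact Real.cos_lt_cos_of_nonneg_of_le_pi hφpos.le hz2 hz1
    simp only [hf]
    exact mul_neg_of_pos_of_neg hkpos (by linarith)
  -- sign of f on (-2φ, 0): positive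
  have hsignl : ∀ x ∈ Set.Ioo (-(2 * φ)) 0, 0 < f x := by
    intro x hx
    have hy1 : -φ < x + φ := by linarith [hx.1]
    have hy2 : x + φ < φ := by linarith [hx.2]
    have habs : |x + φ| < φ := abs_lt.mpr ⟨hy1, hy2⟩
    have hcos : cos φ < cos (x + φ) := by
      rw [← Real.cos_abs (x + φ)]
      exact Real.cos_lt_cos_of_nonneg_of_le_pi (abs_nonneg _) (by linarith) habs
    simp only [hf]
    exact mul_pos hkpos (by linarith)
  rcases lt_trichotomy (θ' 0) 0 with hlt | heq0 | hgt
  · -- reflected system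
    set g : ℝ → ℝ := fun x => -f (-x) with hg
    have hglip : LipschitzWith (Real.toNNReal k) g := by
      apply LipschitzWith.of_dist_le_mul
      intro x y
      have := hlip.dist_le_mul (-x) (-y)
      simpa [hg, Real.dist_eq, abs_sub_comm, neg_sub_neg] using this
    have hg0 : g 0 = 0 := by simp [hg, hf0]
    have hgb : g (2 * φ) = 0 := by simp [hg, hfneg2φ]
    have hgneg : ∀ x ∈ Set.Ioo 0 (2 * φ), g x < 0 := by
      intro x hx
      have : -x ∈ Set.Ioo (-(2 * φ)) 0 := ⟨by linarith [hx.2], by linarith [hx.1]⟩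
      simp only [hg, neg_neg]
      linarith [hsignl (-x) this]
    set ψ : ℝ → ℝ := fun t => -θ' t with hψ
    have hψode : ∀ t ≥ (0:ℝ), HasDerivAt ψ (g (ψ t)) t := by
      intro t ht
      have := (hode t ht).neg
      simp only [hψ, hg, neg_neg]
      exact this
    have hψ0 : ψ 0 ∈ Set.Ioo 0 (2 * φ) := by
      constructor
      · simp [hψ]; linarith
      · simp [hψ]
        have := h0.1
        linarith
    have hcore := core hglip hg0 hgb hgneg hψode hψ0
    have : Tendsto (fun t => -ψ t) atTop (nhds (-0)) := hcore.neg
    simpa [hψ] using this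
  · -- θ' 0 = 0: the solution is identically 0 on [0, ∞)
    have hzero : ∀ t ≥ (0:ℝ), θ' t = 0 := by
      intro t ht
      have h := ODE_solution_unique (v := fun _ x => f x) (K := Real.toNNReal k)
        (fun _ => hlip)
        (f := θ') (g := fun _ => (0:ℝ)) (a := 0) (b := t)
        (fun s hs => ((hode s hs.1).continuousAt).continuousWithinAt)
        (fun s hs => (hode s hs.1).hasDerivWithinAt)
        continuousOn_const
        (fun s _ => by simpa [hf0] using (hasDerivWithinAt_const s (Set.Ici s) (0:ℝ)))
        heq0
      exact h ⟨ht, le_refl t⟩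
    have : θ' =ᶠ[atTop] fun _ => (0:ℝ) := by
      filter_upwards [eventually_ge_atTop (0:ℝ)] with t ht
      exact hzero t ht
    exact Tendsto.congr' this.symm tendsto_const_nhds
  · -- θ' 0 > 0: apply core directly
    apply core hlip hf0 hf2π hsignr hode
    constructor
    · exact hgt
    · have := h0.2
      linarith
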